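/- Let X₁,X₂,X₃,X₄ be the 4×4 matrices σ_Z⊗I₂, σ_X⊗I₂, σ_Y⊗σ_Z, σ_Y⊗σ_Y and set Y_{ℓm,±} = (1/√2)(X_ℓ ± X_m)ᵀ for 1 ≤ ℓ < m ≤ 4. Then for the maximally entangled state |φ₄⟩ ∈ ℂ⁴⊗ℂ⁴, the CHSH value ⟨φ₄| (X_ℓ + X_m) ⊗ Y_{ℓm,+} + (X_ℓ − X_m) ⊗ Y_{ℓm,−} |φ₄⟩ equals 2√2 for every pair ℓ < m, and hence the sum over all six pairs equals 12√2. -/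

import Mathlib

open Matrix Kronecker

noncomputable def sX : Matrix (Fin 2) (Fin 2) ℂ := !![0, 1; 1, 0]
noncomputable def sY : Matrix (Fin 2) (Fin 2) ℂ := !![0, -Complex.I; Complex.I, 0]
noncomputable def sZ : Matrix (Fin 2) (Fin 2) ℂ := !![1, 0; 0, -1]

noncomputable def Xmat : Fin 4 → Matrix (Fin 2 × Fin 2) (Fin 2 × Fin 2) ℂ
  | 0 => sZ ⊗ₖ (1 : Matrix (Fin 2) (Fin 2) ℂ)
  | 1 => sX ⊗ₖ (1 : Matrix (Fin 2) (Fin 2) ℂ)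
  | 2 => sY ⊗ₖ sZ
  | 3 => sY ⊗ₖ sY

/-- Y_{ℓm,+} = (1/√2)(X_ℓ + X_m)ᵀ. -/
noncomputable def Yp (ℓ m : Fin 4) : Matrix (Fin 2 × Fin 2) (Fin 2 × Fin 2) ℂ :=
  ((Real.sqrt 2 : ℂ))⁻¹ • (Xmat ℓ + Xmat m)ᵀ

/-- Y_{ℓm,−} = (1/√2)(X_ℓ − X_m)ᵀ. -/
noncomputable def Ym (ℓ m : Fin 4) : Matrix (Fin 2 × Fin 2) (Fin 2 × Fin 2) ℂ :=
  ((Real.sqrt 2 : ℂ))⁻¹ • (Xmat ℓ - Xmat m)ᵀ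

/-- The maximally entangled state |φ₄⟩. -/
noncomputable def phi4 : (Fin 2 × Fin 2) × (Fin 2 × Fin 2) → ℂ :=
  fun p => if p.1 = p.2 then (1 / 2 : ℂ) else 0

/-- CHSH value of the strategy (φ₄; X_ℓ, X_m; Y_{ℓm,+}, Y_{ℓm,−}). -/
noncomputable def CHSHval (ℓ m : Fin 4) : ℂ :=
  star phi4 ⬝ᵥ
    (((Xmat ℓ + Xmat m) ⊗ₖ Yp ℓ m + (Xmat ℓ - Xmat m) ⊗ₖ Ym ℓ m).mulVec phi4)

lemma star_phi4 : star phi4 = phi4 := by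
  funext p; simp only [phi4, Pi.star_apply]; split <;> simp

lemma inner_kron (A B : Matrix (Fin 2 × Fin 2) (Fin 2 × Fin 2) ℂ) :
    star phi4 ⬝ᵥ ((A ⊗ₖ B).mulVec phi4)
      = (∑ i, ∑ j, A i j * B i j) / 4 := by
  rw [star_phi4]
  simp only [dotProduct, mulVec, phi4, kroneckerMap_apply, Fintype.sum_prod_type,
    ite_mul, mul_ite, zero_mul, mul_zero, Prod.mk.injEq, ite_and,
    Finset.sum_ite_eq, Finset.sum_ite_eq', Finset.sum_ite_irrel, Finset.sum_const_zero,
    Finset.mem_univ, if_true, Finset.mul_sum, Finset.sum_div]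
  exact Finset.sum_congr rfl fun _ _ => Finset.sum_congr rfl fun _ _ =>
    Finset.sum_congr rfl fun _ _ => Finset.sum_congr rfl fun _ _ => by ring

lemma sqrt2_ne : (Real.sqrt 2 : ℂ) ≠ 0 := by
  simp only [ne_eq, Complex.ofReal_eq_zero]
  positivity

lemma sq2 : (Real.sqrt 2 : ℂ) * (Real.sqrt 2 : ℂ) = 2 := by
  rw [← Complex.ofReal_mul, Real.mul_self_sqrt (by norm_num)]; norm_num

lemma entry_sum (ℓ m : Fin 4) (h : ℓ < m) :
    (∑ i, ∑ j, (Xmat ℓ + Xmat m) i j * (Xmat ℓ + Xmat m)ᵀ i j)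
    + (∑ i, ∑ j, (Xmat ℓ - Xmat m) i j * (Xmat ℓ - Xmat m)ᵀ i j) = 16 := by
  fin_cases ℓ <;> fin_cases m <;> simp_all <;>
    · simp only [Xmat, sX, sY, sZ, Matrix.add_apply, Matrix.sub_apply,
        Matrix.transpose_apply, kroneckerMap_apply, Matrix.one_apply,
        Fintype.sum_prod_type, Fin.sum_univ_two, Matrix.cons_val', Matrix.cons_val_zero,
        Matrix.cons_val_one, Matrix.head_cons, Matrix.empty_val',
        Matrix.cons_val_fin_one, Matrix.of_apply]
      norm_num [Complex.I_sq]
      try ring_nf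
      try simp [Complex.I_sq]
      try ring

lemma key (ℓ m : Fin 4) (h : ℓ < m) : CHSHval ℓ m = (2 * Real.sqrt 2 : ℝ) := by
  have e1 : (Xmat ℓ + Xmat m) ⊗ₖ Yp ℓ m
      = ((Real.sqrt 2 : ℂ))⁻¹ • ((Xmat ℓ + Xmat m) ⊗ₖ (Xmat ℓ + Xmat m)ᵀ) := by
    rw [Yp, Matrix.kronecker_smul]
  have e2 : (Xmat ℓ - Xmat m) ⊗ₖ Ym ℓ m
      = ((Real.sqrt 2 : ℂ))⁻¹ • ((Xmat ℓ - Xmat m) ⊗ₖ (Xmat ℓ - Xmat m)ᵀ) := by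
    rw [Ym, Matrix.kronecker_smul]
  rw [CHSHval, e1, e2, ← smul_add, smul_mulVec, dotProduct_smul,
    add_mulVec, dotProduct_add, inner_kron, inner_kron]
  rw [← add_div, entry_sum ℓ m h]
  rw [smul_eq_mul]
  norm_num
  rw [inv_mul_eq_div, div_eq_iff sqrt2_ne]
  linear_combination (-2) * sq2

theorem stmt19 :
    (∀ ℓ m : Fin 4, ℓ < m → CHSHval ℓ m = (2 * Real.sqrt 2 : ℝ)) ∧
    (∑ p ∈ Finset.univ.filter (fun p : Fin 4 × Fin 4 => p.1 < p.2),
        CHSHval p.1 p.2) = (12 * Real.sqrt 2 : ℝ) := by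
  refine ⟨key, ?_⟩
  have hs : (Finset.univ.filter fun p : Fin 4 × Fin 4 => p.1 < p.2)
      = {(0,1),(0,2),(0,3),(1,2),(1,3),(2,3)} := by decide
  rw [hs]
  rw [Finset.sum_insert (by decide), Finset.sum_insert (by decide),
    Finset.sum_insert (by decide), Finset.sum_insert (by decide),
    Finset.sum_insert (by decide), Finset.sum_singleton]
  rw [key 0 1 (by decide), key 0 2 (by decide), key 0 3 (by decide),
    key 1 2 (by decide), key 1 3 (by decide), key 2 3 (by decide)]
  push_cast
  ring
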